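/- For every α₁, α₂ ≥ 0, the set Λ_{α₁,α₂} is finite. -/

import Mathlib

/-- The subset `Γ_{α₁,α₂}` of an ellipse in `ℝ²`. -/
def GammaSet (a1 a2 : ℝ) : Set (ℝ × ℝ) :=
  {s | 0 ≤ s.1 ∧ 0 ≤ s.2 ∧
    s.1 ^ 2 - s.1 * s.2 + s.2 ^ 2 = 2 * (1 + a1) * s.1 + 2 * (1 + a2) * s.2}

/-- Membership in `Λ_{α₁,α₂}`: the smallest subset of `Γ_{α₁,α₂}` containing the six
distinguished points and closed under the two horizontal/vertical propagation rules. -/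
inductive LambdaMem (a1 a2 : ℝ) : ℝ × ℝ → Prop
  | pt₀ : LambdaMem a1 a2 (0, 0)
  | pt₁ : LambdaMem a1 a2 (2 * (1 + a1), 0)
  | pt₂ : LambdaMem a1 a2 (0, 2 * (1 + a2))
  | pt₃ : LambdaMem a1 a2 (2 * (1 + a1), 2 * (2 + a1 + a2))
  | pt₄ : LambdaMem a1 a2 (2 * (2 + a1 + a2), 2 * (1 + a2))
  | pt₅ : LambdaMem a1 a2 (2 * (2 + a1 + a2), 2 * (2 + a1 + a2))
  | rule₂ (a b c d : ℝ) (m : ℕ) : LambdaMem a1 a2 (a, b) → (c, d) ∈ GammaSet a1 a2 →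
      c = a + 2 * m → b ≤ d → LambdaMem a1 a2 (c, d)
  | rule₃ (a b c d : ℝ) (n : ℕ) : LambdaMem a1 a2 (a, b) → (c, d) ∈ GammaSet a1 a2 →
      d = b + 2 * n → a ≤ c → LambdaMem a1 a2 (c, d)

/-- The set `Λ_{α₁,α₂}`. -/
def LambdaSet (a1 a2 : ℝ) : Set (ℝ × ℝ) := {p | LambdaMem a1 a2 p}

namespace LamFin

/-- A global coordinate bound for points of `Γ`. -/
noncomputable def MM (a1 a2 : ℝ) : ℝ := 4 * (2 + a1 + a2)

lemma gamma_bound (a1 a2 : ℝ) (h1 : 0 ≤ a1) (h2 : 0 ≤ a2) {p : ℝ × ℝ}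
    (hp : p ∈ GammaSet a1 a2) : p.1 ≤ MM a1 a2 ∧ p.2 ≤ MM a1 a2 := by
  obtain ⟨hx, hy, he⟩ := hp
  unfold MM
  constructor
  · nlinarith [sq_nonneg (2*p.2 - p.1 - 2*(1+a2)), sq_nonneg p.1, mul_nonneg hx hy,
      mul_nonneg hx h1, mul_nonneg hx h2, sq_nonneg (p.1 - p.2)]
  · nlinarith [sq_nonneg (2*p.1 - p.2 - 2*(1+a1)), sq_nonneg p.2, mul_nonneg hx hy,
      mul_nonneg hy h1, mul_nonneg hy h2, sq_nonneg (p.1 - p.2)]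

open Classical in
/-- The "staircase status" of a point. -/
noncomputable def rho (a1 a2 : ℝ) (p : ℝ × ℝ) : ℤ :=
  if (p.1 + 2*(1+a2) ≤ 2*p.2 ∧ p.2 + 2*(1+a1) ≤ 2*p.1) then 0
  else if (2*(1+a1) + 2*(1+a2) ≤ p.1 + p.2) then 1
  else if (p.1 + 2*(1+a2) ≤ 2*p.2 ∨ p.2 + 2*(1+a1) ≤ 2*p.1) then 2
  else 3

lemma rho_nonneg (a1 a2 : ℝ) (p : ℝ × ℝ) : 0 ≤ rho a1 a2 p := by
  unfold rho; split_ifs <;> norm_num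

lemma rho_le (a1 a2 : ℝ) (p : ℝ × ℝ) : rho a1 a2 p ≤ 3 := by
  unfold rho; split_ifs <;> norm_num

noncomputable def cx (a1 a2 : ℝ) (p : ℝ × ℝ) : ℤ := ⌈(MM a1 a2 - p.1) / 2⌉
noncomputable def cy (a1 a2 : ℝ) (p : ℝ × ℝ) : ℤ := ⌈(MM a1 a2 - p.2) / 2⌉

/-- The decreasing measure. -/
noncomputable def mu (a1 a2 : ℝ) (p : ℝ × ℝ) : ℤ :=
  4 * (cx a1 a2 p + cy a1 a2 p) + rho a1 a2 p

lemma vieta_vert (a1 a2 : ℝ) {p q : ℝ × ℝ} (hp : p ∈ GammaSet a1 a2)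
    (hq : q ∈ GammaSet a1 a2) (hx : q.1 = p.1) (hne : q.2 ≠ p.2) :
    q.2 + p.2 = p.1 + 2*(1+a2) := by
  obtain ⟨-, -, hep⟩ := hp
  obtain ⟨-, -, heq⟩ := hq
  have h : (q.2 - p.2) * (q.2 + p.2 - p.1 - 2*(1+a2)) = 0 := by
    rw [hx] at heq; linear_combination heq - hep
  rcases mul_eq_zero.1 h with h' | h'
  · exact absurd (sub_eq_zero.1 h') hne
  · linarith [sub_eq_zero.1 h']

lemma vieta_horiz (a1 a2 : ℝ) {p q : ℝ × ℝ} (hp : p ∈ GammaSet a1 a2)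
    (hq : q ∈ GammaSet a1 a2) (hy : q.2 = p.2) (hne : q.1 ≠ p.1) :
    q.1 + p.1 = p.2 + 2*(1+a1) := by
  obtain ⟨-, -, hep⟩ := hp
  obtain ⟨-, -, heq⟩ := hq
  have h : (q.1 - p.1) * (q.1 + p.1 - p.2 - 2*(1+a1)) = 0 := by
    rw [hy] at heq; linear_combination heq - hep
  rcases mul_eq_zero.1 h with h' | h'
  · exact absurd (sub_eq_zero.1 h') hne
  · linarith [sub_eq_zero.1 h']

lemma rho_vert (a1 a2 : ℝ) {p q : ℝ × ℝ} (hp : p ∈ GammaSet a1 a2)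
    (hq : q ∈ GammaSet a1 a2) (hx : q.1 = p.1) (hlt : p.2 < q.2) :
    rho a1 a2 q < rho a1 a2 p := by
  have hv : q.2 + p.2 = p.1 + 2*(1+a2) := vieta_vert a1 a2 hp hq hx (by linarith)
  have hVmq : q.1 + 2*(1+a2) ≤ 2*q.2 := by rw [hx]; linarith
  have hnVmp : ¬ (p.1 + 2*(1+a2) ≤ 2*p.2) := by intro h; linarith
  by_cases hS : 2*(1+a1) + 2*(1+a2) ≤ p.1 + p.2
  · have hq0 : rho a1 a2 q = 0 := by
      unfold rho; rw [if_pos ⟨hVmq, by rw [hx]; linarith⟩]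
    have hp1 : rho a1 a2 p = 1 := by
      unfold rho; rw [if_neg (fun h => hnVmp h.1), if_pos hS]
    omega
  · by_cases hH : p.2 + 2*(1+a1) ≤ 2*p.1
    · have hq1 : rho a1 a2 q = 1 := by
        unfold rho
        rw [if_neg (fun h => hS (by rw [hx] at h; exact by linarith [h.2])),
          if_pos (by rw [hx]; linarith)]
      have hp2 : rho a1 a2 p = 2 := by
        unfold rho; rw [if_neg (fun h => hnVmp h.1), if_neg hS, if_pos (Or.inr hH)]
      omega
    · have hq2 : rho a1 a2 q = 2 := by
        unfold rho
        rw [if_neg (fun h => hS (by rw [hx] at h; exact by linarith [h.2])),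
          if_neg (by rw [hx]; intro h; exact hH (by linarith)),
          if_pos (Or.inl hVmq)]
      have hp3 : rho a1 a2 p = 3 := by
        unfold rho
        rw [if_neg (fun h => hnVmp h.1), if_neg hS,
          if_neg (by rintro (h | h); exacts [hnVmp h, hH h])]
      omega

lemma rho_horiz (a1 a2 : ℝ) {p q : ℝ × ℝ} (hp : p ∈ GammaSet a1 a2)
    (hq : q ∈ GammaSet a1 a2) (hy : q.2 = p.2) (hlt : p.1 < q.1) :
    rho a1 a2 q < rho a1 a2 p := by
  have hv : q.1 + p.1 = p.2 + 2*(1+a1) := vieta_horiz a1 a2 hp hq hy (by linarith)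
  have hHmq : q.2 + 2*(1+a1) ≤ 2*q.1 := by rw [hy]; linarith
  have hnHmp : ¬ (p.2 + 2*(1+a1) ≤ 2*p.1) := by intro h; linarith
  by_cases hS : 2*(1+a1) + 2*(1+a2) ≤ p.1 + p.2
  · have hq0 : rho a1 a2 q = 0 := by
      unfold rho; rw [if_pos ⟨by rw [hy]; linarith, hHmq⟩]
    have hp1 : rho a1 a2 p = 1 := by
      unfold rho; rw [if_neg (fun h => hnHmp h.2), if_pos hS]
    omega
  · by_cases hV : p.1 + 2*(1+a2) ≤ 2*p.2
    · have hq1 : rho a1 a2 q = 1 := by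
        unfold rho
        rw [if_neg (fun h => hS (by rw [hy] at h; exact by linarith [h.1])),
          if_pos (by rw [hy]; linarith)]
      have hp2 : rho a1 a2 p = 2 := by
        unfold rho; rw [if_neg (fun h => hnHmp h.2), if_neg hS, if_pos (Or.inl hV)]
      omega
    · have hq2 : rho a1 a2 q = 2 := by
        unfold rho
        rw [if_neg (fun h => hS (by rw [hy] at h; exact by linarith [h.1])),
          if_neg (by rw [hy]; intro h; exact hV (by linarith)),
          if_pos (Or.inr hHmq)]
      have hp3 : rho a1 a2 p = 3 := by
        unfold rho
        rw [if_neg (fun h => hnHmp h.2), if_neg hS,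
          if_neg (by rintro (h | h); exacts [hV h, hnHmp h])]
      omega

/-- One propagation step. -/
def Step (p q : ℝ × ℝ) : Prop :=
  (∃ m : ℕ, q.1 = p.1 + 2 * m ∧ p.2 ≤ q.2) ∨ (∃ n : ℕ, q.2 = p.2 + 2 * n ∧ p.1 ≤ q.1)

lemma cx_jump (a1 a2 : ℝ) {p q : ℝ × ℝ} (m : ℕ) (h : q.1 = p.1 + 2 * m) :
    cx a1 a2 q = cx a1 a2 p - m := by
  unfold cx
  have : (MM a1 a2 - q.1) / 2 = (MM a1 a2 - p.1) / 2 - (m : ℤ) := by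
    rw [h]; push_cast; ring
  rw [this, Int.ceil_sub_intCast]

lemma cy_jump (a1 a2 : ℝ) {p q : ℝ × ℝ} (n : ℕ) (h : q.2 = p.2 + 2 * n) :
    cy a1 a2 q = cy a1 a2 p - n := by
  unfold cy
  have : (MM a1 a2 - q.2) / 2 = (MM a1 a2 - p.2) / 2 - (n : ℤ) := by
    rw [h]; push_cast; ring
  rw [this, Int.ceil_sub_intCast]

lemma cx_mono (a1 a2 : ℝ) {p q : ℝ × ℝ} (h : p.1 ≤ q.1) : cx a1 a2 q ≤ cx a1 a2 p :=
  Int.ceil_le_ceil (by linarith)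

lemma cy_mono (a1 a2 : ℝ) {p q : ℝ × ℝ} (h : p.2 ≤ q.2) : cy a1 a2 q ≤ cy a1 a2 p :=
  Int.ceil_le_ceil (by linarith)

/-- Any step either fixes the point or strictly decreases the measure. -/
lemma mu_decrease (a1 a2 : ℝ) {p q : ℝ × ℝ} (hp : p ∈ GammaSet a1 a2)
    (hq : q ∈ GammaSet a1 a2) (hs : Step p q) : q = p ∨ mu a1 a2 q < mu a1 a2 p := by
  rcases hs with ⟨m, hm, hd⟩ | ⟨n, hn, hd⟩
  · rcases Nat.eq_zero_or_pos m with hm0 | hm1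
    · subst hm0
      have hx : q.1 = p.1 := by simpa using hm
      by_cases he : q.2 = p.2
      · exact Or.inl (Prod.ext_iff.2 ⟨hx, he⟩)
      · right
        have hlt : p.2 < q.2 := lt_of_le_of_ne hd (Ne.symm he)
        have h1 : cx a1 a2 q = cx a1 a2 p := by unfold cx; rw [hx]
        have h2 : cy a1 a2 q ≤ cy a1 a2 p := cy_mono a1 a2 hd
        have h3 : rho a1 a2 q < rho a1 a2 p := rho_vert a1 a2 hp hq hx hlt
        unfold mu; omega
    · right
      have h1 : cx a1 a2 q = cx a1 a2 p - m := cx_jump a1 a2 m hm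
      have h2 : cy a1 a2 q ≤ cy a1 a2 p := cy_mono a1 a2 hd
      have h3 := rho_le a1 a2 q
      have h4 := rho_nonneg a1 a2 p
      have h5 : (1 : ℤ) ≤ m := by exact_mod_cast hm1
      unfold mu; omega
  · rcases Nat.eq_zero_or_pos n with hn0 | hn1
    · subst hn0
      have hy : q.2 = p.2 := by simpa using hn
      by_cases he : q.1 = p.1
      · exact Or.inl (Prod.ext_iff.2 ⟨he, hy⟩)
      · right
        have hlt : p.1 < q.1 := lt_of_le_of_ne hd (Ne.symm he)
        have h1 : cy a1 a2 q = cy a1 a2 p := by unfold cy; rw [hy]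
        have h2 : cx a1 a2 q ≤ cx a1 a2 p := cx_mono a1 a2 hd
        have h3 : rho a1 a2 q < rho a1 a2 p := rho_horiz a1 a2 hp hq hy hlt
        unfold mu; omega
    · right
      have h1 : cy a1 a2 q = cy a1 a2 p - n := cy_jump a1 a2 n hn
      have h2 : cx a1 a2 q ≤ cx a1 a2 p := cx_mono a1 a2 hd
      have h3 := rho_le a1 a2 q
      have h4 := rho_nonneg a1 a2 p
      have h5 : (1 : ℤ) ≤ n := by exact_mod_cast hn1
      unfold mu; omega

lemma mu_bounds (a1 a2 : ℝ) (h1 : 0 ≤ a1) (h2 : 0 ≤ a2) {p : ℝ × ℝ}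
    (hp : p ∈ GammaSet a1 a2) :
    0 ≤ mu a1 a2 p ∧ mu a1 a2 p ≤ 8 * ⌈MM a1 a2 / 2⌉ + 3 := by
  obtain ⟨hb1, hb2⟩ := gamma_bound a1 a2 h1 h2 hp
  obtain ⟨hx0, hy0, -⟩ := hp
  have c1 : 0 ≤ cx a1 a2 p := Int.ceil_nonneg (div_nonneg (by linarith) (by norm_num))
  have c2 : 0 ≤ cy a1 a2 p := Int.ceil_nonneg (div_nonneg (by linarith) (by norm_num))
  have c3 : cx a1 a2 p ≤ ⌈MM a1 a2 / 2⌉ := Int.ceil_le_ceil (by linarith)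
  have c4 : cy a1 a2 p ≤ ⌈MM a1 a2 / 2⌉ := Int.ceil_le_ceil (by linarith)
  have r1 := rho_nonneg a1 a2 p
  have r2 := rho_le a1 a2 p
  unfold mu; omega

/-- The level of a point in the reachability hierarchy. -/
noncomputable def lvl (a1 a2 : ℝ) (p : ℝ × ℝ) : ℕ :=
  (8 * ⌈MM a1 a2 / 2⌉ + 3 - mu a1 a2 p).toNat

/-- The reachability hierarchy. -/
def Reach (a1 a2 : ℝ) : ℕ → Set (ℝ × ℝ)
  | 0 => {(0, 0), (2 * (1 + a1), 0), (0, 2 * (1 + a2)), (2 * (1 + a1), 2 * (2 + a1 + a2)),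
      (2 * (2 + a1 + a2), 2 * (1 + a2)), (2 * (2 + a1 + a2), 2 * (2 + a1 + a2))}
  | (k + 1) => Reach a1 a2 k ∪ {q | q ∈ GammaSet a1 a2 ∧ ∃ p ∈ Reach a1 a2 k, Step p q}

lemma reach_mono (a1 a2 : ℝ) {k l : ℕ} (h : k ≤ l) : Reach a1 a2 k ⊆ Reach a1 a2 l := by
  induction l with
  | zero => rw [Nat.le_zero.1 h]
  | succ n ih =>
    rcases Nat.le_succ_iff.1 h with h' | h'
    · exact (ih h').trans Set.subset_union_left
    · rw [h']

lemma sliceX_finite (a1 a2 c : ℝ) : {q : ℝ × ℝ | q ∈ GammaSet a1 a2 ∧ q.1 = c}.Finite := by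
  set s : ℝ := c + 2*(1+a2) with hs
  set D : ℝ := 2*(1+a1)*c - c^2 + s^2/4 with hD
  refine Set.Finite.subset
    (((Set.finite_singleton ((c, s/2 - Real.sqrt D) : ℝ × ℝ)).insert (c, s/2 + Real.sqrt D))) ?_
  rintro ⟨x, y⟩ ⟨⟨-, -, he⟩, hc⟩
  simp only at hc he
  subst hc
  have hsq : (y - s/2)^2 = D := by rw [hD, hs]; linear_combination he
  have hab : Real.sqrt D = |y - s/2| := by rw [← hsq, Real.sqrt_sq_eq_abs]
  simp only [Set.mem_insert_iff, Set.mem_singleton_iff, Prod.mk.injEq]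
  rcases abs_cases (y - s/2) with ⟨h, -⟩ | ⟨h, -⟩
  · left; rw [hab, h]; exact ⟨trivial, by ring⟩
  · right; rw [hab, h]; exact ⟨trivial, by ring⟩

lemma sliceY_finite (a1 a2 c : ℝ) : {q : ℝ × ℝ | q ∈ GammaSet a1 a2 ∧ q.2 = c}.Finite := by
  set s : ℝ := c + 2*(1+a1) with hs
  set D : ℝ := 2*(1+a2)*c - c^2 + s^2/4 with hD
  refine Set.Finite.subset
    (((Set.finite_singleton ((s/2 - Real.sqrt D, c) : ℝ × ℝ)).insert (s/2 + Real.sqrt D, c))) ?_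
  rintro ⟨x, y⟩ ⟨⟨-, -, he⟩, hc⟩
  simp only at hc he
  subst hc
  have hsq : (x - s/2)^2 = D := by rw [hD, hs]; linear_combination he
  have hab : Real.sqrt D = |x - s/2| := by rw [← hsq, Real.sqrt_sq_eq_abs]
  simp only [Set.mem_insert_iff, Set.mem_singleton_iff, Prod.mk.injEq]
  rcases abs_cases (x - s/2) with ⟨h, -⟩ | ⟨h, -⟩
  · left; rw [hab, h]; exact ⟨by ring, trivial⟩
  · right; rw [hab, h]; exact ⟨by ring, trivial⟩

lemma next_finite (a1 a2 : ℝ) (h1 : 0 ≤ a1) (h2 : 0 ≤ a2) (p : ℝ × ℝ) :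
    {q : ℝ × ℝ | q ∈ GammaSet a1 a2 ∧ Step p q}.Finite := by
  set N1 : ℕ := (⌈(MM a1 a2 - p.1) / 2⌉).toNat + 1 with hN1
  set N2 : ℕ := (⌈(MM a1 a2 - p.2) / 2⌉).toNat + 1 with hN2
  have hfin : ((⋃ m ∈ Finset.range N1, {q : ℝ × ℝ | q ∈ GammaSet a1 a2 ∧ q.1 = p.1 + 2 * m}) ∪
      (⋃ n ∈ Finset.range N2, {q : ℝ × ℝ | q ∈ GammaSet a1 a2 ∧ q.2 = p.2 + 2 * n})).Finite :=
    Set.Finite.union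
      (Set.Finite.biUnion (Finset.range N1).finite_toSet (fun m _ => sliceX_finite a1 a2 _))
      (Set.Finite.biUnion (Finset.range N2).finite_toSet (fun n _ => sliceY_finite a1 a2 _))
  refine hfin.subset ?_
  rintro q ⟨hq, hstep | hstep⟩
  · obtain ⟨m, hm, -⟩ := hstep
    have hb : q.1 ≤ MM a1 a2 := (gamma_bound a1 a2 h1 h2 hq).1
    have hmr : (m : ℝ) ≤ (MM a1 a2 - p.1) / 2 := by
      have : p.1 + 2 * m ≤ MM a1 a2 := hm ▸ hb
      linarith
    have hmz : (m : ℤ) ≤ ⌈(MM a1 a2 - p.1) / 2⌉ := by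
      have := (hmr.trans (Int.le_ceil _))
      exact_mod_cast this
    have hmN : m < N1 := by rw [hN1]; omega
    refine Set.mem_union_left _ ?_
    simp only [Set.mem_iUnion]
    exact ⟨m, Finset.mem_range.2 hmN, ⟨hq, hm⟩⟩
  · obtain ⟨n, hn, -⟩ := hstep
    have hb : q.2 ≤ MM a1 a2 := (gamma_bound a1 a2 h1 h2 hq).2
    have hnr : (n : ℝ) ≤ (MM a1 a2 - p.2) / 2 := by
      have : p.2 + 2 * n ≤ MM a1 a2 := hn ▸ hb
      linarith
    have hnz : (n : ℤ) ≤ ⌈(MM a1 a2 - p.2) / 2⌉ := by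
      have := (hnr.trans (Int.le_ceil _))
      exact_mod_cast this
    have hnN : n < N2 := by rw [hN2]; omega
    refine Set.mem_union_right _ ?_
    simp only [Set.mem_iUnion]
    exact ⟨n, Finset.mem_range.2 hnN, ⟨hq, hn⟩⟩

lemma reach_finite (a1 a2 : ℝ) (h1 : 0 ≤ a1) (h2 : 0 ≤ a2) (k : ℕ) :
    (Reach a1 a2 k).Finite := by
  induction k with
  | zero =>
    show ({_, _, _, _, _, _} : Set (ℝ × ℝ)).Finite
    exact (((((Set.finite_singleton _).insert _).insert _).insert _).insert _).insert _
  | succ n ih =>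
    refine Set.Finite.union ih ?_
    refine Set.Finite.subset (Set.Finite.biUnion ih
      (fun p _ => next_finite a1 a2 h1 h2 p)) ?_
    rintro q ⟨hq, p, hp, hstep⟩
    exact Set.mem_biUnion hp ⟨hq, hstep⟩

lemma lambda_gamma (a1 a2 : ℝ) (h1 : 0 ≤ a1) (h2 : 0 ≤ a2) {p : ℝ × ℝ}
    (h : LambdaMem a1 a2 p) : p ∈ GammaSet a1 a2 := by
  induction h with
  | pt₀ => exact ⟨le_refl _, le_refl _, by norm_num⟩
  | pt₁ => exact ⟨by simp; linarith, le_refl _, by simp; ring⟩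
  | pt₂ => exact ⟨le_refl _, by simp; linarith, by simp; ring⟩
  | pt₃ => exact ⟨by simp; linarith, by simp; linarith, by simp; ring⟩
  | pt₄ => exact ⟨by simp; linarith, by simp; linarith, by simp; ring⟩
  | pt₅ => exact ⟨by simp; linarith, by simp; linarith, by simp; ring⟩
  | rule₂ a b c d m hmem hΓ hc hd ih => exact hΓ
  | rule₃ a b c d n hmem hΓ hn hd ih => exact hΓ

lemma mem_reach (a1 a2 : ℝ) (h1 : 0 ≤ a1) (h2 : 0 ≤ a2) {p : ℝ × ℝ}
    (h : LambdaMem a1 a2 p) : p ∈ Reach a1 a2 (lvl a1 a2 p) := by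
  induction h with
  | pt₀ => exact reach_mono a1 a2 (Nat.zero_le _) (by simp [Reach])
  | pt₁ => exact reach_mono a1 a2 (Nat.zero_le _) (by simp [Reach])
  | pt₂ => exact reach_mono a1 a2 (Nat.zero_le _) (by simp [Reach])
  | pt₃ => exact reach_mono a1 a2 (Nat.zero_le _) (by simp [Reach])
  | pt₄ => exact reach_mono a1 a2 (Nat.zero_le _) (by simp [Reach])
  | pt₅ => exact reach_mono a1 a2 (Nat.zero_le _) (by simp [Reach])
  | rule₂ a b c d m hmem hΓ hc hd ih =>
    have hpΓ : ((a, b) : ℝ × ℝ) ∈ GammaSet a1 a2 := lambda_gamma a1 a2 h1 h2 hmem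
    have hstep : Step (a, b) (c, d) := Or.inl ⟨m, by simpa using hc, by simpa using hd⟩
    rcases mu_decrease a1 a2 hpΓ hΓ hstep with heq | hlt
    · rw [heq]; exact ih
    · have hmem1 : ((c, d) : ℝ × ℝ) ∈ Reach a1 a2 (lvl a1 a2 (a, b) + 1) :=
        Set.mem_union_right _ ⟨hΓ, (a, b), ih, hstep⟩
      refine reach_mono a1 a2 ?_ hmem1
      have hb1 := mu_bounds a1 a2 h1 h2 hpΓ
      have hb2 := mu_bounds a1 a2 h1 h2 hΓ
      unfold lvl; omega
  | rule₃ a b c d n hmem hΓ hn hd ih =>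
    have hpΓ : ((a, b) : ℝ × ℝ) ∈ GammaSet a1 a2 := lambda_gamma a1 a2 h1 h2 hmem
    have hstep : Step (a, b) (c, d) := Or.inr ⟨n, by simpa using hn, by simpa using hd⟩
    rcases mu_decrease a1 a2 hpΓ hΓ hstep with heq | hlt
    · rw [heq]; exact ih
    · have hmem1 : ((c, d) : ℝ × ℝ) ∈ Reach a1 a2 (lvl a1 a2 (a, b) + 1) :=
        Set.mem_union_right _ ⟨hΓ, (a, b), ih, hstep⟩
      refine reach_mono a1 a2 ?_ hmem1
      have hb1 := mu_bounds a1 a2 h1 h2 hpΓ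
      have hb2 := mu_bounds a1 a2 h1 h2 hΓ
      unfold lvl; omega

end LamFin

/-- for every `α₁, α₂ ≥ 0`, the set `Λ_{α₁,α₂}` is finite. -/
theorem LambdaSet_finite (a1 a2 : ℝ) (h1 : 0 ≤ a1) (h2 : 0 ≤ a2) :
    (LambdaSet a1 a2).Finite := by
  refine (LamFin.reach_finite a1 a2 h1 h2
    (8 * ⌈LamFin.MM a1 a2 / 2⌉ + 3).toNat).subset ?_
  intro p hp
  have h := LamFin.mem_reach a1 a2 h1 h2 hp
  refine LamFin.reach_mono a1 a2 ?_ h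
  have hb := LamFin.mu_bounds a1 a2 h1 h2 (LamFin.lambda_gamma a1 a2 h1 h2 hp)
  unfold LamFin.lvl
  omega
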